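/- For the case p = 0: a vector u in the algebraic Fock space satisfies (ε + m)·a(u) = 0 and (m − ε)·a⁺(u) = 0 with u ≠ 0 only if m = ε or m = −ε; if m = ε ≠ 0 then u must be proportional to e₀. -/
import Mathlib


/-- Annihilation operator on the algebraic Fock space: a(eₙ) = √n eₙ₋₁. -/
noncomputable def ann : (ℕ →₀ ℂ) →ₗ[ℂ] (ℕ →₀ ℂ) :=
  Finsupp.lsum ℂ fun n => ((Real.sqrt n : ℝ) : ℂ) • Finsupp.lsingle (n - 1)

/-- Creation operator on the algebraic Fock space: a⁺(eₙ) = √(n+1) eₙ₊₁. -/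
noncomputable def cre : (ℕ →₀ ℂ) →ₗ[ℂ] (ℕ →₀ ℂ) :=
  Finsupp.lsum ℂ fun n => ((Real.sqrt (n + 1) : ℝ) : ℂ) • Finsupp.lsingle (n + 1)

lemma cre_apply (u : ℕ →₀ ℂ) (n : ℕ) :
    cre u (n+1) = ((Real.sqrt (n+1) : ℝ) : ℂ) * u n := by
  classical
  simp only [cre, Finsupp.lsum_apply, Finsupp.sum_apply, LinearMap.smul_apply,
    Finsupp.smul_apply, Finsupp.lsingle_apply, Finsupp.single_apply, smul_eq_mul,
    mul_ite, mul_zero, add_left_inj]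
  rw [Finsupp.sum_ite_eq']
  simp [Finsupp.mem_support_iff]
  intro h; simp [h]

lemma ann_apply (u : ℕ →₀ ℂ) (n : ℕ) :
    ann u n = ((Real.sqrt (n+1) : ℝ) : ℂ) * u (n+1) := by
  classical
  simp only [ann, Finsupp.lsum_apply, Finsupp.sum_apply, LinearMap.smul_apply,
    Finsupp.smul_apply, Finsupp.lsingle_apply, Finsupp.single_apply, smul_eq_mul,
    mul_ite, mul_zero]
  rw [Finsupp.sum_eq_single (n+1)]
  · simp
  · intro k _ hk
    rcases k with _ | k
    · simp
    · simp [Nat.succ_sub_one]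
      intro h; exact absurd (by omega : k + 1 = n + 1) hk
  · simp

/-- The p = 0 case: (ε+m)·a u = 0 and (m−ε)·a⁺ u = 0 with u ≠ 0 force
m = ε or m = −ε, and if m = ε ≠ 0 then u is proportional to the Fock vacuum e₀. -/
theorem stmt6 (ε m : ℝ) (u : ℕ →₀ ℂ) (hu : u ≠ 0)
    (h1 : ((ε + m : ℝ) : ℂ) • ann u = 0)
    (h2 : ((m - ε : ℝ) : ℂ) • cre u = 0) :
    (m = ε ∨ m = -ε) ∧
    (m = ε → m ≠ 0 → ∃ c : ℂ, u = c • Finsupp.single 0 1) := by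
  have hcre : cre u ≠ 0 := by
    intro h
    apply hu
    ext n
    have := congrArg (fun v : ℕ →₀ ℂ => v (n+1)) h
    simp [cre_apply] at this
    rcases this with h' | h'
    · exact absurd h' (by positivity)
    · simpa using h'
  have hme : m = ε := by
    rcases smul_eq_zero.mp h2 with h | h
    · have : m - ε = 0 := by exact_mod_cast h
      linarith
    · exact absurd h hcre
  refine ⟨Or.inl hme, fun _ hm0 => ?_⟩
  have hsum : ε + m ≠ 0 := by rw [← hme]; intro h; apply hm0; linarith
  have hann : ann u = 0 := by
    rcases smul_eq_zero.mp h1 with h | h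
    · exact absurd (by exact_mod_cast h) hsum
    · exact h
  refine ⟨u 0, ?_⟩
  ext n
  rcases n with _ | n
  · simp
  · have := congrArg (fun v : ℕ →₀ ℂ => v n) hann
    simp [ann_apply] at this
    rcases this with h' | h'
    · exact absurd h' (by positivity)
    · simp [h', Finsupp.single_apply]
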